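/- Weyl's inequality for singular values: let W₁, W₂ ∈ ℝ^{m×n} with m ≥ n, with singular values ordered decreasingly σ₁ ≥ ... ≥ σ_n for each matrix. Then for positive integers i, j with i + j − 1 ≤ n, we have σ_{i+j−1}(W₁ + W₂) ≤ σ_i(W₁) + σ_j(W₂). -/

import Mathlib

open Matrix

/-- The `k`-th largest singular value (0-indexed) of a real matrix `W`:
the square root of the `k`-th largest eigenvalue of `WᵀW`. -/
noncomputable def singularValue {m n : ℕ} (W : Matrix (Fin m) (Fin n) ℝ) (k : Fin n) : ℝ :=
  Real.sqrt
    ((Matrix.isHermitian_conjTranspose_mul_self W).eigenvalues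
      (Tuple.sort (Matrix.isHermitian_conjTranspose_mul_self W).eigenvalues k.rev))

section WeylAux
open Finset
variable {n : ℕ} {A : Matrix (Fin n) (Fin n) ℝ} (hA : A.IsHermitian)

noncomputable def sval : Fin n → ℝ := fun k => hA.eigenvalues (Tuple.sort hA.eigenvalues k)

noncomputable def sbasis : OrthonormalBasis (Fin n) ℝ (EuclideanSpace ℝ (Fin n)) :=
  hA.eigenvectorBasis.reindex (Tuple.sort hA.eigenvalues).symm

lemma sval_monotone : Monotone (sval hA) := Tuple.monotone_sort _

lemma sbasis_apply (k : Fin n) :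
    sbasis hA k = hA.eigenvectorBasis (Tuple.sort hA.eigenvalues k) := by
  simp [sbasis]

lemma toEuclideanLin_sbasis (k : Fin n) :
    Matrix.toEuclideanLin A (sbasis hA k) = sval hA k • sbasis hA k := by
  ext x
  have := hA.mulVec_eigenvectorBasis (Tuple.sort hA.eigenvalues k)
  simp only [Matrix.toEuclideanLin_apply, sbasis_apply, sval]
  simpa using congrFun this x

lemma repr_toEuclideanLin (x : EuclideanSpace ℝ (Fin n)) (k : Fin n) :
    (sbasis hA).repr (Matrix.toEuclideanLin A x) k = sval hA k * (sbasis hA).repr x k := by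
  rw [OrthonormalBasis.repr_apply_apply, OrthonormalBasis.repr_apply_apply,
    ← (Matrix.isHermitian_iff_isSymmetric.mp hA) (sbasis hA k) x,
    toEuclideanLin_sbasis]
  exact real_inner_smul_left _ _ _

lemma inner_repr (x y : EuclideanSpace ℝ (Fin n)) :
    (inner ℝ x y : ℝ) = ∑ k, (sbasis hA).repr x k * (sbasis hA).repr y k := by
  rw [← (sbasis hA).repr.inner_map_map x y, PiLp.inner_apply]
  simp [RCLike.inner_apply, conj_trivial, mul_comm]

lemma inner_toEuclideanLin (x : EuclideanSpace ℝ (Fin n)) :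
    (inner ℝ x (Matrix.toEuclideanLin A x) : ℝ)
      = ∑ k, sval hA k * ((sbasis hA).repr x k)^2 := by
  rw [inner_repr hA]
  exact Finset.sum_congr rfl fun k _ => by
    rw [repr_toEuclideanLin hA]; ring

lemma norm_sq_eq_sum (x : EuclideanSpace ℝ (Fin n)) :
    ‖x‖^2 = ∑ k, ((sbasis hA).repr x k)^2 := by
  rw [← real_inner_self_eq_norm_sq, inner_repr hA]
  exact Finset.sum_congr rfl fun k _ => (sq _).symm

noncomputable def sspan (s : Finset (Fin n)) : Submodule ℝ (EuclideanSpace ℝ (Fin n)) :=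
  Submodule.span ℝ (⇑(sbasis hA) '' s)

lemma mem_sspan_iff (s : Finset (Fin n)) (x : EuclideanSpace ℝ (Fin n)) :
    x ∈ sspan hA s ↔ ∀ k ∉ s, (sbasis hA).repr x k = 0 := by
  rw [sspan, ← (sbasis hA).coe_toBasis, Module.Basis.mem_span_image, Finsupp.support_subset_iff]
  simp [OrthonormalBasis.coe_toBasis_repr_apply]

lemma finrank_sspan (s : Finset (Fin n)) :
    Module.finrank ℝ (sspan hA s) = s.card := by
  rw [sspan, show ⇑(sbasis hA) '' ↑s = Set.range (⇑(sbasis hA) ∘ ((↑) : s → Fin n)) by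
    rw [Set.range_comp, Subtype.range_coe]]
  rw [finrank_span_eq_card ((sbasis hA).orthonormal.linearIndependent.comp
    ((↑) : s → Fin n) Subtype.coe_injective)]
  exact Fintype.card_coe s

lemma quad_le_of_mem (t : Fin n) (x : EuclideanSpace ℝ (Fin n))
    (hx : x ∈ sspan hA (Finset.Iic t)) :
    (inner ℝ x (Matrix.toEuclideanLin A x) : ℝ) ≤ sval hA t * ‖x‖^2 := by
  rw [inner_toEuclideanLin hA, norm_sq_eq_sum hA, Finset.mul_sum]
  refine Finset.sum_le_sum fun k _ => ?_
  rcases eq_or_ne ((sbasis hA).repr x k) 0 with h | h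
  · simp [h]
  · have hk : k ≤ t := by
      by_contra hk
      exact h ((mem_sspan_iff hA _ x).mp hx k (by simpa using hk))
    exact mul_le_mul_of_nonneg_right (sval_monotone hA hk) (sq_nonneg _)

lemma quad_ge_of_mem (t : Fin n) (x : EuclideanSpace ℝ (Fin n))
    (hx : x ∈ sspan hA (Finset.Ici t)) :
    sval hA t * ‖x‖^2 ≤ (inner ℝ x (Matrix.toEuclideanLin A x) : ℝ) := by
  rw [inner_toEuclideanLin hA, norm_sq_eq_sum hA, Finset.mul_sum]
  refine Finset.sum_le_sum fun k _ => ?_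
  rcases eq_or_ne ((sbasis hA).repr x k) 0 with h | h
  · simp [h]
  · have hk : t ≤ k := by
      by_contra hk
      exact h ((mem_sspan_iff hA _ x).mp hx k (by simpa using hk))
    exact mul_le_mul_of_nonneg_right (sval_monotone hA hk) (sq_nonneg _)

lemma norm_toEuclideanLin_sq {m : ℕ} (W : Matrix (Fin m) (Fin n) ℝ)
    (x : EuclideanSpace ℝ (Fin n)) :
    ‖Matrix.toEuclideanLin W x‖^2
      = (inner ℝ x (Matrix.toEuclideanLin (Wᴴ * W) x) : ℝ) := by
  have h : Matrix.toEuclideanLin (Wᴴ * W) x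
      = Matrix.toEuclideanLin Wᴴ (Matrix.toEuclideanLin W x) := by
    simp [Matrix.toEuclideanLin_apply, Matrix.mulVec_mulVec]
  rw [h, Matrix.toEuclideanLin_conjTranspose_eq_adjoint, LinearMap.adjoint_inner_right,
    real_inner_self_eq_norm_sq]

lemma finrank_inf_ge (U V : Submodule ℝ (EuclideanSpace ℝ (Fin n))) :
    Module.finrank ℝ U + Module.finrank ℝ V ≤ n + Module.finrank ℝ (U ⊓ V : Submodule ℝ _) := by
  rw [← Submodule.finrank_sup_add_finrank_inf_eq U V]
  exact Nat.add_le_add_right ((Submodule.finrank_le _).trans_eq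
    (finrank_euclideanSpace_fin (𝕜 := ℝ))) _
theorem weyl_aux {m n : ℕ}
    (W₁ W₂ : Matrix (Fin m) (Fin n) ℝ) (i j : Fin n) (hij : i.val + j.val < n) :
    singularValue (W₁ + W₂) ⟨i.val + j.val, hij⟩ ≤
      singularValue W₁ i + singularValue W₂ j := by
  classical
  have hA1 := Matrix.isHermitian_conjTranspose_mul_self W₁
  have hA2 := Matrix.isHermitian_conjTranspose_mul_self W₂
  have hA12 := Matrix.isHermitian_conjTranspose_mul_self (W₁ + W₂)
  set k : Fin n := ⟨i.val + j.val, hij⟩ with hk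
  set S1 := sspan hA1 (Finset.Iic i.rev) with hS1
  set S2 := sspan hA2 (Finset.Iic j.rev) with hS2
  set H := sspan hA12 (Finset.Ici k.rev) with hH
  have hd1 : Module.finrank ℝ S1 = (i.rev : ℕ) + 1 := by
    rw [hS1, finrank_sspan, Fin.card_Iic]
  have hd2 : Module.finrank ℝ S2 = (j.rev : ℕ) + 1 := by
    rw [hS2, finrank_sspan, Fin.card_Iic]
  have hdH : Module.finrank ℝ H = n - (k.rev : ℕ) := by
    rw [hH, finrank_sspan, Fin.card_Ici]
  have hri : (i.rev : ℕ) = n - ((i:ℕ) + 1) := Fin.val_rev i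
  have hrj : (j.rev : ℕ) = n - ((j:ℕ) + 1) := Fin.val_rev j
  have hrk : (k.rev : ℕ) = n - ((k:ℕ) + 1) := Fin.val_rev k
  have h12 := finrank_inf_ge S1 S2
  have hfin := finrank_inf_ge (S1 ⊓ S2) H
  have hi : (i : ℕ) < n := i.isLt
  have hj : (j : ℕ) < n := j.isLt
  have hkk : (k : ℕ) = i.val + j.val := rfl
  have hpos : 0 < Module.finrank ℝ ((S1 ⊓ S2) ⊓ H : Submodule ℝ _) := by omega
  have hne : ((S1 ⊓ S2) ⊓ H : Submodule ℝ _) ≠ ⊥ := by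
    intro hbot
    rw [hbot, finrank_bot] at hpos
    exact lt_irrefl 0 hpos
  obtain ⟨x, hx, hx0⟩ := Submodule.exists_mem_ne_zero_of_ne_bot hne
  have hxS1 : x ∈ S1 := hx.1.1
  have hxS2 : x ∈ S2 := hx.1.2
  have hxH : x ∈ H := hx.2
  -- upper bounds
  have key1 : ‖Matrix.toEuclideanLin W₁ x‖ ≤ singularValue W₁ i * ‖x‖ := by
    have hq := quad_le_of_mem hA1 i.rev x hxS1
    have h0 : (0:ℝ) ≤ hA1.eigenvalues (Tuple.sort hA1.eigenvalues i.rev) :=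
      Matrix.eigenvalues_conjTranspose_mul_self_nonneg W₁ _
    calc ‖Matrix.toEuclideanLin W₁ x‖
        = Real.sqrt (‖Matrix.toEuclideanLin W₁ x‖^2) := (Real.sqrt_sq (norm_nonneg _)).symm
      _ ≤ Real.sqrt (sval hA1 i.rev * ‖x‖^2) := by
          apply Real.sqrt_le_sqrt
          rw [norm_toEuclideanLin_sq]
          exact hq
      _ = singularValue W₁ i * ‖x‖ := by
          simp only [sval]
          rw [Real.sqrt_mul h0, Real.sqrt_sq (norm_nonneg _)]
          rfl
  have key2 : ‖Matrix.toEuclideanLin W₂ x‖ ≤ singularValue W₂ j * ‖x‖ := by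
    have hq := quad_le_of_mem hA2 j.rev x hxS2
    have h0 : (0:ℝ) ≤ hA2.eigenvalues (Tuple.sort hA2.eigenvalues j.rev) :=
      Matrix.eigenvalues_conjTranspose_mul_self_nonneg W₂ _
    calc ‖Matrix.toEuclideanLin W₂ x‖
        = Real.sqrt (‖Matrix.toEuclideanLin W₂ x‖^2) := (Real.sqrt_sq (norm_nonneg _)).symm
      _ ≤ Real.sqrt (sval hA2 j.rev * ‖x‖^2) := by
          apply Real.sqrt_le_sqrt
          rw [norm_toEuclideanLin_sq]
          exact hq
      _ = singularValue W₂ j * ‖x‖ := by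
          simp only [sval]
          rw [Real.sqrt_mul h0, Real.sqrt_sq (norm_nonneg _)]
          rfl
  have key3 : singularValue (W₁ + W₂) k * ‖x‖ ≤ ‖Matrix.toEuclideanLin (W₁ + W₂) x‖ := by
    have hq := quad_ge_of_mem hA12 k.rev x hxH
    have h0 : (0:ℝ) ≤ hA12.eigenvalues (Tuple.sort hA12.eigenvalues k.rev) :=
      Matrix.eigenvalues_conjTranspose_mul_self_nonneg (W₁ + W₂) _
    calc singularValue (W₁ + W₂) k * ‖x‖
        = Real.sqrt (sval hA12 k.rev * ‖x‖^2) := by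
          simp only [sval]
          rw [Real.sqrt_mul h0, Real.sqrt_sq (norm_nonneg _)]
          rfl
      _ ≤ Real.sqrt (‖Matrix.toEuclideanLin (W₁ + W₂) x‖^2) := by
          apply Real.sqrt_le_sqrt
          rw [norm_toEuclideanLin_sq]
          exact hq
      _ = ‖Matrix.toEuclideanLin (W₁ + W₂) x‖ := Real.sqrt_sq (norm_nonneg _)
  have hadd : Matrix.toEuclideanLin (W₁ + W₂) x
      = Matrix.toEuclideanLin W₁ x + Matrix.toEuclideanLin W₂ x := by
    rw [map_add]
    rfl
  have hchain : singularValue (W₁ + W₂) k * ‖x‖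
      ≤ (singularValue W₁ i + singularValue W₂ j) * ‖x‖ := by
    calc singularValue (W₁ + W₂) k * ‖x‖
        ≤ ‖Matrix.toEuclideanLin (W₁ + W₂) x‖ := key3
      _ ≤ ‖Matrix.toEuclideanLin W₁ x‖ + ‖Matrix.toEuclideanLin W₂ x‖ := by
          rw [hadd]; exact norm_add_le _ _
      _ ≤ singularValue W₁ i * ‖x‖ + singularValue W₂ j * ‖x‖ := add_le_add key1 key2
      _ = (singularValue W₁ i + singularValue W₂ j) * ‖x‖ := (add_mul _ _ _).symm
  exact le_of_mul_le_mul_right hchain (norm_pos_iff.mpr hx0)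

end WeylAux

/-- Weyl's inequality for singular values: for `W₁, W₂ ∈ ℝ^{m×n}` with `m ≥ n`,
and (0-indexed) indices `i, j` with `i + j < n`,
`σ_{i+j}(W₁ + W₂) ≤ σ_i(W₁) + σ_j(W₂)` (this is the 1-indexed
`σ_{i+j-1}(W₁+W₂) ≤ σ_i(W₁) + σ_j(W₂)`). -/
theorem weyl_inequality_singularValues {m n : ℕ} (hmn : m ≥ n)
    (W₁ W₂ : Matrix (Fin m) (Fin n) ℝ) (i j : Fin n) (hij : i.val + j.val < n) :
    singularValue (W₁ + W₂) ⟨i.val + j.val, hij⟩ ≤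
      singularValue W₁ i + singularValue W₂ j := by
  exact weyl_aux W₁ W₂ i j hij
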